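/- In the recursive computation of the infinite-processor robust high-water mark under parallel combination of C₁ and C₂ into C: the maximum water mark over robust antichains of size > 1 in C equals the maximum of (i) m̄₁ + m̄₂, (ii) max(m̄₁, r₁, t₁, 0) + r₂, and (iii) max(m̄₂, r₂, t₂, 0) + r₁, where for j ∈ {1,2}: t_j = ∑_{e∈C_j} t(e); r_j is the maximum robust multi-edge water mark in C_j (−∞ if none); and m̄_j equals the maximum single-edge water mark in C_j if it exceeds M/(2p), else −∞. -/
import Mathlib


/-- Parallel-combination recursion for the infinite-processor robust
high-water mark.  C is the parallel combination of C₁ and C₂ (edge set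
E₁ ⊕ E₂).  Every robust antichain of C is the union of a (possibly empty)
robust antichain of C₁ and one of C₂; an empty side contributes max(t_j, 0)
(suspended companion or unexecuted); single-edge antichains are robust iff
their water mark exceeds M/(2p).  With
r_j  = sup of water marks of robust multi-edge antichains of C_j (−∞ if none),
m̄_j = sup of water marks of robust single-edge antichains of C_j (−∞ if none,
      i.e. the max single-edge water mark when it exceeds M/(2p)),
the maximum water mark over robust antichains of size > 1 in C equals
max( m̄₁ + m̄₂, max(m̄₁, r₁, t₁, 0) + r₂, max(m̄₂, r₂, t₂, 0) + r₁ ). -/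
theorem stmt18 {E₁ E₂ : Type*} [Fintype E₁] [Fintype E₂]
    [DecidableEq E₁] [DecidableEq E₂]
    (M : ℝ) (hM : 0 < M) (p : ℕ) (hp : 0 < p)
    (t₁ t₂ : ℝ)
    (Rob₁ : Finset E₁ → Prop) (Rob₂ : Finset E₂ → Prop)
    (RobC : Finset (E₁ ⊕ E₂) → Prop)
    (W₁ : Finset E₁ → ℝ) (W₂ : Finset E₂ → ℝ) (WC : Finset (E₁ ⊕ E₂) → ℝ)
    (hdecomp : ∀ C, RobC C → ∃ X Y,
      C = X.image Sum.inl ∪ Y.image Sum.inr ∧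
      (X = ∅ ∨ Rob₁ X) ∧ (Y = ∅ ∨ Rob₂ Y))
    (hcomb : ∀ X Y, (X = ∅ ∨ Rob₁ X) → (Y = ∅ ∨ Rob₂ Y) →
      1 < X.card + Y.card → RobC (X.image Sum.inl ∪ Y.image Sum.inr))
    (hWne : ∀ (X : Finset E₁) (Y : Finset E₂), X.Nonempty → Y.Nonempty →
      WC (X.image Sum.inl ∪ Y.image Sum.inr) = W₁ X + W₂ Y)
    (hWl : ∀ X : Finset E₁, X.Nonempty →
      WC (X.image Sum.inl) = W₁ X + max t₂ 0)
    (hWr : ∀ Y : Finset E₂, Y.Nonempty →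
      WC (Y.image Sum.inr) = max t₁ 0 + W₂ Y)
    (hsingle₁ : ∀ x : E₁, Rob₁ {x} ↔ M / (2 * p) < W₁ {x})
    (hsingle₂ : ∀ y : E₂, Rob₂ {y} ↔ M / (2 * p) < W₂ {y}) :
    sSup {w : EReal | ∃ C, RobC C ∧ 1 < C.card ∧ w = (WC C : EReal)}
      = max
          ((sSup {w : EReal | ∃ x : E₁, Rob₁ {x} ∧ w = (W₁ {x} : EReal)}) +
           (sSup {w : EReal | ∃ y : E₂, Rob₂ {y} ∧ w = (W₂ {y} : EReal)}))
          (max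
            ((max
                (max (sSup {w : EReal | ∃ x : E₁, Rob₁ {x} ∧ w = (W₁ {x} : EReal)})
                     (sSup {w : EReal | ∃ A, Rob₁ A ∧ 1 < A.card ∧ w = (W₁ A : EReal)}))
                ((max t₁ 0 : ℝ) : EReal)) +
              sSup {w : EReal | ∃ A, Rob₂ A ∧ 1 < A.card ∧ w = (W₂ A : EReal)})
            ((max
                (max (sSup {w : EReal | ∃ y : E₂, Rob₂ {y} ∧ w = (W₂ {y} : EReal)})
                     (sSup {w : EReal | ∃ A, Rob₂ A ∧ 1 < A.card ∧ w = (W₂ A : EReal)}))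
                ((max t₂ 0 : ℝ) : EReal)) +
              sSup {w : EReal | ∃ A, Rob₁ A ∧ 1 < A.card ∧ w = (W₁ A : EReal)})) := by

  classical
  set S1 := {w : EReal | ∃ x : E₁, Rob₁ {x} ∧ w = (W₁ {x} : EReal)} with hS1def
  set S2 := {w : EReal | ∃ y : E₂, Rob₂ {y} ∧ w = (W₂ {y} : EReal)} with hS2def
  set R1 := {w : EReal | ∃ A, Rob₁ A ∧ 1 < A.card ∧ w = (W₁ A : EReal)} with hR1def
  set R2 := {w : EReal | ∃ A, Rob₂ A ∧ 1 < A.card ∧ w = (W₂ A : EReal)} with hR2def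
  set L := {w : EReal | ∃ C, RobC C ∧ 1 < C.card ∧ w = (WC C : EReal)} with hLdef
  have fS1 : S1.Finite :=
    (Set.finite_range (fun x : E₁ => (W₁ {x} : EReal))).subset
      (by rintro w ⟨x, _, rfl⟩; exact ⟨x, rfl⟩)
  have fS2 : S2.Finite :=
    (Set.finite_range (fun y : E₂ => (W₂ {y} : EReal))).subset
      (by rintro w ⟨y, _, rfl⟩; exact ⟨y, rfl⟩)
  have fR1 : R1.Finite :=
    (Set.finite_range (fun A : Finset E₁ => (W₁ A : EReal))).subset
      (by rintro w ⟨A, _, _, rfl⟩; exact ⟨A, rfl⟩)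
  have fR2 : R2.Finite :=
    (Set.finite_range (fun A : Finset E₂ => (W₂ A : EReal))).subset
      (by rintro w ⟨A, _, _, rfl⟩; exact ⟨A, rfl⟩)
  have hdisj : ∀ (X : Finset E₁) (Y : Finset E₂),
      Disjoint (X.image Sum.inl) (Y.image Sum.inr) := by
    intro X Y
    rw [Finset.disjoint_left]
    rintro a ha hb
    obtain ⟨x, _, rfl⟩ := Finset.mem_image.1 ha
    obtain ⟨y, _, h⟩ := Finset.mem_image.1 hb
    exact Sum.inl_ne_inr h.symm
  have hcard : ∀ (X : Finset E₁) (Y : Finset E₂),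
      (X.image Sum.inl ∪ Y.image Sum.inr).card = X.card + Y.card := by
    intro X Y
    rw [Finset.card_union_of_disjoint (hdisj X Y),
      Finset.card_image_of_injective _ Sum.inl_injective,
      Finset.card_image_of_injective _ Sum.inr_injective]
  have memL : ∀ (X : Finset E₁) (Y : Finset E₂), (X = ∅ ∨ Rob₁ X) → (Y = ∅ ∨ Rob₂ Y) →
      1 < X.card + Y.card → (WC (X.image Sum.inl ∪ Y.image Sum.inr) : EReal) ∈ L :=
    fun X Y hX hY hc => ⟨_, hcomb X Y hX hY hc, by rw [hcard]; exact hc, rfl⟩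
  -- the seven lower-bound inequalities
  have h11 : sSup S1 + sSup S2 ≤ sSup L := by
    rcases Set.eq_empty_or_nonempty S1 with h | h
    · simp [h]
    rcases Set.eq_empty_or_nonempty S2 with h2 | h2
    · simp [h2]
    obtain ⟨x, hx, hxe⟩ := h.csSup_mem fS1
    obtain ⟨y, hy, hye⟩ := h2.csSup_mem fS2
    rw [hxe, hye, ← EReal.coe_add]
    apply le_sSup
    have hm := memL {x} {y} (Or.inr hx) (Or.inr hy) (by simp)
    rwa [hWne _ _ (by simp) (by simp)] at hm
  have h12 : sSup S1 + sSup R2 ≤ sSup L := by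
    rcases Set.eq_empty_or_nonempty S1 with h | h
    · simp [h]
    rcases Set.eq_empty_or_nonempty R2 with h2 | h2
    · simp [h2]
    obtain ⟨x, hx, hxe⟩ := h.csSup_mem fS1
    obtain ⟨A, hA, hAc, hAe⟩ := h2.csSup_mem fR2
    rw [hxe, hAe, ← EReal.coe_add]
    apply le_sSup
    have hm := memL {x} A (Or.inr hx) (Or.inr hA) (by rw [Finset.card_singleton]; omega)
    rwa [hWne _ _ (by simp) (Finset.card_pos.1 (by omega))] at hm
  have h13 : sSup R1 + sSup R2 ≤ sSup L := by
    rcases Set.eq_empty_or_nonempty R1 with h | h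
    · simp [h]
    rcases Set.eq_empty_or_nonempty R2 with h2 | h2
    · simp [h2]
    obtain ⟨A, hA, hAc, hAe⟩ := h.csSup_mem fR1
    obtain ⟨B, hB, hBc, hBe⟩ := h2.csSup_mem fR2
    rw [hAe, hBe, ← EReal.coe_add]
    apply le_sSup
    have hm := memL A B (Or.inr hA) (Or.inr hB) (by omega)
    rwa [hWne _ _ (Finset.card_pos.1 (by omega)) (Finset.card_pos.1 (by omega))] at hm
  have h14 : ((max t₁ 0 : ℝ) : EReal) + sSup R2 ≤ sSup L := by
    rcases Set.eq_empty_or_nonempty R2 with h2 | h2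
    · simp [h2]
    obtain ⟨A, hA, hAc, hAe⟩ := h2.csSup_mem fR2
    rw [hAe, ← EReal.coe_add]
    apply le_sSup
    have hm := memL ∅ A (Or.inl rfl) (Or.inr hA) (by simpa using hAc)
    simp only [Finset.image_empty, Finset.empty_union] at hm
    rwa [hWr A (Finset.card_pos.1 (by omega))] at hm
  have h21 : sSup S2 + sSup R1 ≤ sSup L := by
    rcases Set.eq_empty_or_nonempty S2 with h | h
    · simp [h]
    rcases Set.eq_empty_or_nonempty R1 with h2 | h2
    · simp [h2]
    obtain ⟨y, hy, hye⟩ := h.csSup_mem fS2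
    obtain ⟨A, hA, hAc, hAe⟩ := h2.csSup_mem fR1
    rw [hye, hAe, ← EReal.coe_add]
    apply le_sSup
    have hm := memL A {y} (Or.inr hA) (Or.inr hy) (by rw [Finset.card_singleton]; omega)
    rw [hWne _ _ (Finset.card_pos.1 (by omega)) (by simp), add_comm] at hm
    exact hm
  have h23 : sSup R2 + sSup R1 ≤ sSup L := by
    rw [add_comm]; exact h13
  have h24 : ((max t₂ 0 : ℝ) : EReal) + sSup R1 ≤ sSup L := by
    rcases Set.eq_empty_or_nonempty R1 with h2 | h2
    · simp [h2]
    obtain ⟨A, hA, hAc, hAe⟩ := h2.csSup_mem fR1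
    rw [hAe, ← EReal.coe_add]
    apply le_sSup
    have hm := memL A ∅ (Or.inr hA) (Or.inl rfl) (by simpa using hAc)
    simp only [Finset.image_empty, Finset.union_empty] at hm
    rw [hWl A (Finset.card_pos.1 (by omega)), add_comm] at hm
    exact hm
  apply le_antisymm
  · -- upper bound
    apply sSup_le
    rintro w ⟨C, hC, hcardC, rfl⟩
    obtain ⟨X, Y, rfl, hX, hY⟩ := hdecomp C hC
    rw [hcard] at hcardC
    rcases X.eq_empty_or_nonempty with rfl | hXne
    · -- X empty
      simp only [Finset.card_empty, Nat.zero_add] at hcardC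
      have hYR : Rob₂ Y := hY.resolve_left (by
        intro h; rw [h] at hcardC; simp at hcardC)
      rw [Finset.image_empty, Finset.empty_union,
        hWr Y (Finset.card_pos.1 (by omega)), EReal.coe_add]
      refine le_trans ?_ (le_max_of_le_right (le_max_left _ _))
      exact add_le_add (le_max_right _ _) (le_sSup ⟨Y, hYR, hcardC, rfl⟩)
    rcases Y.eq_empty_or_nonempty with rfl | hYne
    · -- Y empty
      simp only [Finset.card_empty, Nat.add_zero] at hcardC
      have hXR : Rob₁ X := hX.resolve_left (by
        intro h; rw [h] at hcardC; simp at hcardC)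
      rw [Finset.image_empty, Finset.union_empty,
        hWl X (Finset.card_pos.1 (by omega)), add_comm, EReal.coe_add]
      refine le_trans ?_ (le_max_of_le_right (le_max_right _ _))
      exact add_le_add (le_max_right _ _) (le_sSup ⟨X, hXR, hcardC, rfl⟩)
    · -- both nonempty
      have hXR : Rob₁ X := hX.resolve_left (by
        intro h; exact absurd h (Finset.nonempty_iff_ne_empty.1 hXne))
      have hYR : Rob₂ Y := hY.resolve_left (by
        intro h; exact absurd h (Finset.nonempty_iff_ne_empty.1 hYne))
      rw [hWne _ _ hXne hYne, EReal.coe_add]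
      have hXc := Finset.card_pos.2 hXne
      have hYc := Finset.card_pos.2 hYne
      rcases Nat.lt_or_ge 1 Y.card with hY2 | hY1
      · -- Y multi
        have hW1 : (W₁ X : EReal) ≤ max (sSup S1) (sSup R1) := by
          rcases Nat.lt_or_ge 1 X.card with hX2 | hX1
          · exact le_max_of_le_right (le_sSup ⟨X, hXR, hX2, rfl⟩)
          · obtain ⟨x, rfl⟩ := Finset.card_eq_one.1 (show X.card = 1 by omega)
            exact le_max_of_le_left (le_sSup ⟨x, hXR, rfl⟩)
        refine le_trans ?_ (le_max_of_le_right (le_max_left _ _))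
        exact add_le_add (le_trans hW1 (le_max_left _ _))
          (le_sSup ⟨Y, hYR, hY2, rfl⟩)
      · -- Y singleton
        obtain ⟨y, rfl⟩ := Finset.card_eq_one.1 (show Y.card = 1 by omega)
        rcases Nat.lt_or_ge 1 X.card with hX2 | hX1
        · -- X multi: term 3
          rw [add_comm]
          refine le_trans ?_ (le_max_of_le_right (le_max_right _ _))
          refine add_le_add (le_trans ?_ (le_max_left _ _))
            (le_sSup ⟨X, hXR, hX2, rfl⟩)
          exact le_max_of_le_left (le_sSup ⟨y, hYR, rfl⟩)
        · -- both singletons: term 1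
          obtain ⟨x, rfl⟩ := Finset.card_eq_one.1 (show X.card = 1 by omega)
          refine le_trans ?_ (le_max_left _ _)
          exact add_le_add (le_sSup ⟨x, hXR, rfl⟩) (le_sSup ⟨y, hYR, rfl⟩)
  · -- lower bound
    refine max_le h11 (max_le ?_ ?_)
    · rw [← max_add_add_right, ← max_add_add_right]
      exact max_le (max_le h12 h13) h14
    · rw [← max_add_add_right, ← max_add_add_right]
      exact max_le (max_le h21 h23) h24
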